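/- For every integer n ≥ 1, -C_{n-1} / (3 · 2^{2n-2} · (5/2)_{2n-2}) = (1 / (2^{2n} (1/2)_{2n})) · ( 2n · ((-1)^n (1/2)_n / n!) + Σ_{j=1}^{n-1} (C_{j-1} / (3 · 2^{2j-2} (5/2)_{2j-2})) · ((-1)^{n-j} (1/2)_{n+j} 2^{2j} / (n-j)!) ), where C_j denotes the j-th Catalan number and (a)_k the rising factorial. -/

import Mathlib

/-- Rising factorial (Pochhammer symbol) over ℚ. -/
noncomputable def rf (a : ℚ) (k : ℕ) : ℚ := (ascPochhammer ℚ k).eval a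
lemma rf_zero (a : ℚ) : rf a 0 = 1 := by simp [rf]
lemma rf_one (a : ℚ) : rf a 1 = a := by simp [rf, ascPochhammer_one]
lemma rf_succ (a : ℚ) (k : ℕ) : rf a (k+1) = rf a k * (a + k) := by
  simp [rf, ascPochhammer_succ_right]
lemma rf_succ_left (a : ℚ) (k : ℕ) : rf a (k+1) = a * rf (a+1) k := by
  simp [rf, ascPochhammer_succ_left, Polynomial.eval_comp]
lemma rf_pos (a : ℚ) (h : 0 < a) (k : ℕ) : 0 < rf a k := ascPochhammer_pos k a h

lemma rf_add (a : ℚ) (p q : ℕ) : rf a (p+q) = rf a p * rf (a + p) q := by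
  have h := congrArg (Polynomial.eval a) (ascPochhammer_mul ℚ p q)
  simpa [rf, Polynomial.eval_comp] using h.symm

noncomputable def T (n j : ℕ) : ℚ :=
  (-1)^j * catalan (j-1) * rf (2*j + 1/2) (n-j) / (n-j).factorial
noncomputable def G (n j : ℕ) : ℚ :=
  -((j:ℚ)*(4*j-1)*(4*j-3)) * ((-1)^j * catalan (j-1) * rf (2*j + 1/2) (n-j) / (n+2-j).factorial)
noncomputable def R (n : ℕ) : ℚ := -2*n * rf (1/2) n / n.factorial
noncomputable def F (n : ℕ) : ℚ := ∑ j ∈ Finset.Icc 1 n, T n j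

lemma half_shift (k : ℕ) : rf (1/2) (k+2) = 3/4 * rf (5/2) k := by
  rw [show k+2 = (k+1)+1 from rfl, rf_succ_left]
  rw [show (1/2 : ℚ)+1 = 3/2 by norm_num, rf_succ_left]
  rw [show (3/2 : ℚ)+1 = 5/2 by norm_num]
  ring

lemma Icc_succ (g : ℕ → ℚ) (i : ℕ) :
    ∑ j ∈ Finset.Icc 1 (i+1), g j = (∑ j ∈ Finset.Icc 1 i, g j) + g (i+1) := by
  have h : Finset.Icc 1 (i+1) = insert (i+1) (Finset.Icc 1 i) := by
    ext x; simp only [Finset.mem_Icc, Finset.mem_insert]; omega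
  rw [h, Finset.sum_insert (by simp)]
  ring

lemma tel (g : ℕ → ℚ) (i : ℕ) :
    ∑ j ∈ Finset.Icc 1 i, (g (j+1) - g j) = g (i+1) - g 1 := by
  induction i with
  | zero => simp
  | succ k ih => rw [Icc_succ (fun j => g (j+1) - g j) k, ih]; ring

lemma F_succ (n : ℕ) : F (n+1) = (∑ j ∈ Finset.Icc 1 n, T (n+1) j) + T (n+1) (n+1) := by
  simpa [F] using Icc_succ (fun j => T (n+1) j) n

lemma base1 : F 1 = R 1 := by
  norm_num [F, T, R, rf_zero, rf_one]

lemma base2 : F 2 = R 2 := by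
  have h : Finset.Icc 1 2 = {1, 2} := rfl
  norm_num [F, h, T, R, rf_zero, rf_one, rf_succ, catalan_one]

lemma cat_rec (i : ℕ) : ((i:ℚ)+2) * catalan (i+1) = 2*(2*i+1) * catalan i := by
  have h1 : (i+1+1) * catalan (i+1) = (i+1).centralBinom := succ_mul_catalan_eq_centralBinom (i+1)
  have h2 : (i+1) * (i+1).centralBinom = 2*(2*i+1) * i.centralBinom :=
    Nat.succ_mul_centralBinom_succ i
  have h3 : (i+1) * catalan i = i.centralBinom := succ_mul_catalan_eq_centralBinom i
  have h4 : (i+1)*((i+2) * catalan (i+1)) = (i+1)*(2*(2*i+1)*catalan i) := by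
    rw [show (i+1)*((i+2)*catalan (i+1)) = (i+1)*((i+1+1)*catalan (i+1)) by ring, h1, h2, ← h3]
    ring
  exact_mod_cast Nat.eq_of_mul_eq_mul_left (by omega : 0 < i+1) h4

lemma bid (i : ℕ) :
    -2*(2*((i:ℚ)+1)+1) * R (i+1) - 10 * R (i+2) + 4*((i:ℚ)+3) * R (i+3) + G (i+1) 1 = 0 := by
  simp only [R, G]
  have s1 : (1:ℕ) - 1 = 0 := rfl
  have s2 : i+1-1 = i := by omega
  have s3 : i+1+2-1 = i+2 := by omega
  rw [s1, s2, s3, catalan_zero]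
  have harg : (2*((1:ℕ):ℚ) + 1/2) = 5/2 := by norm_num
  rw [harg]
  have e1 : rf (1/2) (i+2) = rf (1/2) (i+1) * ((1/2:ℚ) + (i+1)) := by
    rw [rf_succ]; push_cast; ring
  have e2 : rf (1/2) (i+3) = rf (1/2) (i+1) * ((1/2:ℚ) + (i+1)) * ((1/2:ℚ) + (i+2)) := by
    rw [rf_succ, e1]; push_cast; ring
  have e3 : rf (5/2) i = 4/3 * (rf (1/2) (i+1) * ((1/2:ℚ) + (i+1))) := by
    have := half_shift i
    rw [e1] at this
    linarith
  have hf1 : ((i+2).factorial : ℚ) = (i+2) * (i+1).factorial := by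
    rw [Nat.factorial_succ]; push_cast; ring
  have hf2 : ((i+3).factorial : ℚ) = (i+3) * ((i+2) * (i+1).factorial) := by
    rw [Nat.factorial_succ]; push_cast [hf1]; ring
  rw [e1, e2, e3, hf1, hf2]
  have hfk : ((i+1).factorial : ℚ) ≠ 0 := by exact_mod_cast (i+1).factorial_ne_zero
  have h2 : ((i:ℚ)+2) ≠ 0 := by positivity
  have h3 : ((i:ℚ)+3) ≠ 0 := by positivity
  push_cast
  field_simp
  ring

lemma cid (i : ℕ) :
    G (i+1) (i+1) + (-2*(2*((i:ℚ)+1)+1) * T (i+1) (i+1)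
      - 10*(T (i+2) (i+1) + T (i+2) (i+2))
      + 4*((i:ℚ)+3)*(T (i+3) (i+1) + T (i+3) (i+2) + T (i+3) (i+3))) = 0 := by
  simp only [T, G]
  have s1 : i+1-(i+1) = 0 := by omega
  have s2 : i+1+2-(i+1) = 2 := by omega
  have s3 : i+1-1 = i := by omega
  have s4 : i+2-(i+1) = 1 := by omega
  have s5 : i+2-(i+2) = 0 := by omega
  have s6 : i+2-1 = i+1 := by omega
  have s7 : i+3-(i+1) = 2 := by omega
  have s8 : i+3-(i+2) = 1 := by omega
  have s9 : i+3-(i+3) = 0 := by omega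
  have s10 : i+3-1 = i+2 := by omega
  simp only [s1, s2, s3, s4, s5, s6, s7, s8, s9, s10]
  set A : ℚ := 2*((i:ℚ)+1) + 1/2 with hA
  have hc1 : (2*((i+1:ℕ):ℚ) + 1/2) = A := by push_cast [hA]; ring
  have hc2 : (2*((i+2:ℕ):ℚ) + 1/2) = A + 2 := by push_cast [hA]; ring
  have hc3 : (2*((i+3:ℕ):ℚ) + 1/2) = A + 4 := by push_cast [hA]; ring
  rw [hc1, hc2, hc3]
  have e0 : ∀ b : ℚ, rf b 0 = 1 := rf_zero
  have e1 : ∀ b : ℚ, rf b 1 = b := rf_one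
  have e2 : rf A 2 = A * (A+1) := by
    rw [show (2:ℕ) = 1+1 from rfl, rf_succ, rf_one]; push_cast; ring
  simp only [e2, e0, e1]
  have hcat2 : ((catalan (i+2)):ℚ) = 2*(2*((i:ℚ)+1)+1) * catalan (i+1) / ((i:ℚ)+3) := by
    have h := cat_rec (i+1)
    have h3 : ((i:ℚ)+3) ≠ 0 := by positivity
    field_simp
    push_cast at h
    linear_combination h
  have hcat1 : ((catalan (i+1)):ℚ) = 2*(2*(i:ℚ)+1) * catalan i / ((i:ℚ)+2) := by
    have h := cat_rec i
    have h2 : ((i:ℚ)+2) ≠ 0 := by positivity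
    field_simp
    linear_combination h
  rw [hcat2, hcat1]
  have hp1 : ((-1:ℚ))^(i+2) = -(-1:ℚ)^(i+1) := by rw [pow_succ]; ring
  have hp2 : ((-1:ℚ))^(i+3) = (-1:ℚ)^(i+1) := by rw [pow_succ, pow_succ]; ring
  rw [hp2, hp1]
  have h2 : ((i:ℚ)+2) ≠ 0 := by positivity
  have h3 : ((i:ℚ)+3) ≠ 0 := by positivity
  push_cast
  field_simp
  ring
lemma star (i k : ℕ) :
    -2*(2*((i:ℚ)+k+2)+1) * T (i+k+2) (i+1) - 10 * T (i+k+3) (i+1)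
      + 4*((i:ℚ)+k+4) * T (i+k+4) (i+1)
      = G (i+k+2) (i+2) - G (i+k+2) (i+1) := by
  have s1 : i+k+2-(i+1) = k+1 := by omega
  have s2 : i+k+3-(i+1) = k+2 := by omega
  have s3 : i+k+4-(i+1) = k+3 := by omega
  have s4 : i+k+2-(i+2) = k := by omega
  have s5 : i+k+2+2-(i+2) = k+2 := by omega
  have s6 : i+k+2+2-(i+1) = k+3 := by omega
  have s7 : i+1-1 = i := by omega
  have s8 : i+2-1 = i+1 := by omega
  simp only [T, G, s1, s2, s3, s4, s5, s6, s7, s8]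
  -- abbreviations
  set A : ℚ := 2*((i:ℚ)+1) + 1/2 with hA
  have hcast1 : (2*((i+1:ℕ):ℚ) + 1/2) = A := by push_cast [hA]; ring
  have hcast2 : (2*((i+2:ℕ):ℚ) + 1/2) = A + 2 := by push_cast [hA]; ring
  rw [hcast1, hcast2]
  have e2 : rf A (k+2) = rf A (k+1) * (A + (k+1)) := by
    rw [rf_succ]; push_cast; ring
  have e3 : rf A (k+3) = rf A (k+1) * (A + (k+1)) * (A + (k+2)) := by
    rw [rf_succ, e2]; push_cast; ring
  have e5 : A * ((A+1) * rf (A+2) k) = rf A (k+1) * (A + (k+1)) := by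
    have h1 : rf A (k+2) = A * rf (A+1) (k+1) := rf_succ_left A (k+1)
    have h2 : rf (A+1) (k+1) = (A+1) * rf (A+1+1) k := rf_succ_left (A+1) k
    rw [show A+1+1 = A+2 by ring] at h2
    rw [h2] at h1
    rw [← h1, e2]
  have hc : ((i:ℚ)+2) * catalan (i+1) = 2*(2*i+1) * catalan i := cat_rec i
  have hA0 : A ≠ 0 := by rw [hA]; positivity
  have hA1 : A + 1 ≠ 0 := by rw [hA]; positivity
  have hQ : rf (A+2) k = rf A (k+1) * (A + (k+1)) / (A * (A+1)) := by
    field_simp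
    linear_combination e5
  have hcat : (catalan (i+1) : ℚ) = 2*(2*i+1) * catalan i / ((i:ℚ)+2) := by
    field_simp
    linear_combination hc
  have hf2 : ((k+2).factorial : ℚ) = (k+2) * (k+1).factorial := by
    rw [Nat.factorial_succ]; push_cast; ring
  have hf3 : ((k+3).factorial : ℚ) = (k+3) * ((k+2) * (k+1).factorial) := by
    rw [Nat.factorial_succ]; push_cast [hf2]; ring
  rw [e2, e3, hQ, hcat, hf2, hf3]
  have hfk : ((k+1).factorial : ℚ) ≠ 0 := by exact_mod_cast (k+1).factorial_ne_zero
  have hk2 : ((k:ℚ)+2) ≠ 0 := by positivity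
  have hk3 : ((k:ℚ)+3) ≠ 0 := by positivity
  have hi2 : ((i:ℚ)+2) ≠ 0 := by positivity
  push_cast
  field_simp
  ring

lemma sum_star (i : ℕ) :
    -2*(2*((i:ℚ)+1)+1) * (∑ j ∈ Finset.Icc 1 i, T (i+1) j)
    - 10 * (∑ j ∈ Finset.Icc 1 i, T (i+2) j)
    + 4*((i:ℚ)+3) * (∑ j ∈ Finset.Icc 1 i, T (i+3) j)
      = G (i+1) (i+1) - G (i+1) 1 := by
  have htel := tel (fun j => G (i+1) j) i
  rw [← htel, Finset.mul_sum, Finset.mul_sum, Finset.mul_sum,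
    ← Finset.sum_sub_distrib, ← Finset.sum_add_distrib]
  apply Finset.sum_congr rfl
  intro j hj
  simp only [Finset.mem_Icc] at hj
  obtain ⟨i', rfl⟩ : ∃ i', j = i'+1 := ⟨j-1, by omega⟩
  obtain ⟨k', rfl⟩ : ∃ k', i = i'+k'+1 := ⟨i-i'-1, by omega⟩
  have h := star i' k'
  have e1 : i'+k'+1+1 = i'+k'+2 := by omega
  have e2 : i'+k'+1+2 = i'+k'+3 := by omega
  have e3 : i'+k'+1+3 = i'+k'+4 := by omega
  rw [e1, e2, e3]
  push_cast at h ⊢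
  linear_combination h

lemma main : ∀ n : ℕ, 1 ≤ n → F n = R n := by
  intro n
  induction n using Nat.strong_induction_on with
  | _ n ih =>
    intro hn
    obtain _ | _ | _ | i := n
    · omega
    · exact base1
    · exact base2
    · show F (i+3) = R (i+3)
      have hF1 : F (i+1) = R (i+1) := ih (i+1) (by omega) (by omega)
      have hF2 : F (i+2) = R (i+2) := ih (i+2) (by omega) (by omega)
      have hs := sum_star i
      have h1 : (∑ j ∈ Finset.Icc 1 i, T (i+1) j) = F (i+1) - T (i+1) (i+1) := by
        have := F_succ i; linarith
      have h2 : (∑ j ∈ Finset.Icc 1 i, T (i+2) j)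
          = F (i+2) - T (i+2) (i+1) - T (i+2) (i+2) := by
        have hA := F_succ (i+1)
        rw [Icc_succ (fun j => T (i+2) j) i] at hA
        linarith
      have h3 : (∑ j ∈ Finset.Icc 1 i, T (i+3) j)
          = F (i+3) - T (i+3) (i+1) - T (i+3) (i+2) - T (i+3) (i+3) := by
        have hA := F_succ (i+2)
        rw [Icc_succ (fun j => T (i+3) j) (i+1), Icc_succ (fun j => T (i+3) j) i] at hA
        linarith
      rw [h1, h2, h3, hF1, hF2] at hs
      have hb := bid i
      have hc := cid i
      have hne : (4*((i:ℚ)+3)) ≠ 0 := by positivity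
      apply mul_left_cancel₀ hne
      linear_combination hs - hb + hc

lemma den_eq (j : ℕ) (hj : 1 ≤ j) :
    (3:ℚ) * 2^(2*j-2) * rf (5/2) (2*j-2) = 2^(2*j) * rf (1/2) (2*j) := by
  obtain ⟨l, rfl⟩ : ∃ l, j = l+1 := ⟨j-1, by omega⟩
  have s1 : 2*(l+1)-2 = 2*l := by omega
  have s2 : 2*(l+1) = 2*l+2 := by omega
  rw [s1, s2, half_shift, pow_add]
  ring

theorem stmt_6 (n : ℕ) (hn : 1 ≤ n) :
    -((catalan (n - 1) : ℚ) / (3 * 2 ^ (2 * n - 2) * rf (5/2) (2 * n - 2)))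
      = (1 / (2 ^ (2 * n) * rf (1/2) (2 * n))) *
        (2 * n * ((-1 : ℚ) ^ n * rf (1/2) n / (n.factorial : ℚ)) +
          ∑ j ∈ Finset.Icc 1 (n - 1),
            ((catalan (j - 1) : ℚ) / (3 * 2 ^ (2 * j - 2) * rf (5/2) (2 * j - 2))) *
              ((-1 : ℚ) ^ (n - j) * rf (1/2) (n + j) * 2 ^ (2 * j) /
                ((n - j).factorial : ℚ))) := by
  obtain ⟨i, rfl⟩ : ∃ i, n = i+1 := ⟨n-1, by omega⟩
  have s0 : i+1-1 = i := by omega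
  rw [s0, den_eq (i+1) (by omega)]
  have hsum : ∑ j ∈ Finset.Icc 1 i,
      ((catalan (j - 1) : ℚ) / (3 * 2 ^ (2 * j - 2) * rf (5/2) (2 * j - 2))) *
        ((-1 : ℚ) ^ (i+1 - j) * rf (1/2) (i+1 + j) * 2 ^ (2 * j) /
          (((i+1) - j).factorial : ℚ))
      = ∑ j ∈ Finset.Icc 1 i, ((-1:ℚ))^(i+1) * T (i+1) j := by
    apply Finset.sum_congr rfl
    intro j hj
    simp only [Finset.mem_Icc] at hj
    rw [den_eq j hj.1]
    have hjn : rf (1/2) (i+1+j) = rf (1/2) (2*j) * rf ((1/2:ℚ) + (2*j:ℕ)) ((i+1)-j) := by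
      rw [show i+1+j = 2*j + ((i+1)-j) by omega, rf_add]
    have harg : ((1/2:ℚ) + ((2*j:ℕ):ℚ)) = 2*(j:ℚ) + 1/2 := by push_cast; ring
    rw [harg] at hjn
    have hsgn : ((-1:ℚ))^((i+1)-j) = (-1)^(i+1) * (-1)^j := by
      have h1 : ((-1:ℚ))^((i+1)-j) * (-1)^j = (-1)^(i+1) := by
        rw [← pow_add, show (i+1)-j+j = i+1 by omega]
      have h2 : ((-1:ℚ))^j * (-1)^j = 1 := by rw [← mul_pow]; norm_num
      calc ((-1:ℚ))^((i+1)-j) = (-1)^((i+1)-j) * ((-1)^j * (-1)^j) := by rw [h2, mul_one]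
      _ = (-1)^(i+1) * (-1)^j := by rw [← mul_assoc, h1]
    rw [hjn, hsgn]
    simp only [T]
    have hrfj : (0:ℚ) < rf (1/2) (2*j) := rf_pos _ (by norm_num) _
    have hfac : (((i+1-j).factorial : ℚ)) ≠ 0 := by exact_mod_cast (i+1-j).factorial_ne_zero
    field_simp
  rw [hsum, ← Finset.mul_sum]
  have hFv : ∑ j ∈ Finset.Icc 1 i, T (i+1) j = F (i+1) - T (i+1) (i+1) := by
    have := F_succ i; linarith
  have hTtop : T (i+1) (i+1) = (-1)^(i+1) * catalan i := by
    simp only [T, show i+1-(i+1) = 0 by omega, show i+1-1 = i by omega, rf_zero,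
      Nat.factorial_zero]
    norm_num
  have hmain : F (i+1) = R (i+1) := main (i+1) (by omega)
  rw [hFv, hmain, hTtop]
  simp only [R]
  have hsq : ((-1:ℚ))^(i+1) * (-1)^(i+1) = 1 := by rw [← mul_pow]; norm_num
  have hrf2n : (0:ℚ) < rf (1/2) (2*(i+1)) := rf_pos _ (by norm_num) _
  have hfac : (((i+1).factorial : ℚ)) ≠ 0 := by exact_mod_cast (i+1).factorial_ne_zero
  have h2p : ((2:ℚ)^(2*(i+1))) ≠ 0 := by positivity
  field_simp
  linear_combination ((catalan i : ℚ) * ((i+1).factorial : ℚ)) * hsq
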